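/- Let G be a finite group in which any two distinct Sylow p-subgroups intersect trivially, let P be a Sylow p-subgroup, and let k be the number of elements of order d in P for some fixed d > 1 dividing |P|. Then the number of elements of order d in G equals k · |G : N_G(P)|. -/

import Mathlib

open scoped Pointwise

section Aux

variable {G : Type*} [Group G] [Fintype G] {p : ℕ} [Fact p.Prime]

omit [Fintype G] in
private lemma orderOf_coe' {H : Subgroup G} (x : H) : orderOf (x : G) = orderOf x :=
  orderOf_injective H.subtype (Subgroup.subtype_injective H) x

private lemma sylow_order_count_eq (P Q : Sylow p G) (d : ℕ) :
    Nat.card {x : (Q : Subgroup G) // orderOf x = d}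
      = Nat.card {x : (P : Subgroup G) // orderOf x = d} := by
  let e : (P : Subgroup G) ≃* (Q : Subgroup G) := Sylow.equiv P Q
  exact Nat.card_congr (Equiv.subtypeEquiv e.toEquiv (fun x => by
    simp [orderOf_injective e.toMonoidHom e.injective])).symm

end Aux

/-- In a finite group whose Sylow `p`-subgroups pairwise intersect trivially, if a Sylow
`p`-subgroup `P` contains exactly `k` elements of order `d` (where `d > 1` divides `|P|`),
then `G` contains exactly `k · |G : N_G(P)|` elements of order `d`. -/
theorem card_orderOf_eq_of_TI_sylow (G : Type*) [Group G] [Fintype G] (p : ℕ) [Fact p.Prime]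
    (P : Sylow p G)
    (hTI : ∀ Q R : Sylow p G, Q ≠ R → (Q : Subgroup G) ⊓ (R : Subgroup G) = ⊥)
    (d k : ℕ) (hd : 1 < d) (hdvd : d ∣ Nat.card (P : Subgroup G))
    (hk : k = Nat.card {x : (P : Subgroup G) // orderOf x = d}) :
    Nat.card {g : G // orderOf g = d} = k * (Subgroup.normalizer ((P : Subgroup G) : Set G)).index := by
  classical
  obtain ⟨n, hn⟩ := IsPGroup.iff_card.mp P.2
  rw [hn] at hdvd
  obtain ⟨m, -, hm⟩ := (Nat.dvd_prime_pow (Fact.out : p.Prime)).mp hdvd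
  have hmem : ∀ g : {g : G // orderOf g = d}, ∃ Q : Sylow p G, (g : G) ∈ Q := by
    rintro ⟨g, hg⟩
    have : IsPGroup p (Subgroup.zpowers g) := by
      apply IsPGroup.of_card (n := m)
      rw [Nat.card_zpowers, hg, hm]
    obtain ⟨Q, hQ⟩ := this.exists_le_sylow
    exact ⟨Q, hQ (Subgroup.mem_zpowers g)⟩
  have hne : ∀ g : {g : G // orderOf g = d}, (g : G) ≠ 1 := by
    rintro ⟨g, hg⟩ h
    have h1 : orderOf g = 1 := by rw [show g = 1 from h, orderOf_one]
    omega
  let f : {g : G // orderOf g = d} → Sylow p G := fun g => Classical.choose (hmem g)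
  have hf : ∀ g, (g : G) ∈ f g := fun g => Classical.choose_spec (hmem g)
  have huniq : ∀ (g : {g : G // orderOf g = d}) (Q : Sylow p G), (g : G) ∈ Q → f g = Q := by
    intro g Q hQ
    by_contra h
    have : (g : G) ∈ ((f g : Subgroup G) ⊓ Q) := ⟨hf g, hQ⟩
    rw [hTI _ _ h] at this
    exact hne g (Subgroup.mem_bot.mp this)
  have fib : ∀ Q : Sylow p G, Nat.card {g : {g : G // orderOf g = d} // f g = Q}
      = Nat.card {x : (Q : Subgroup G) // orderOf x = d} := by
    intro Q
    refine Nat.card_congr (Equiv.ofBijective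
      (fun g => ⟨⟨(g : G), by
        have := hf (g : {g : G // orderOf g = d}); rwa [g.2] at this⟩, by
        rw [← orderOf_coe']; exact g.1.2⟩) ⟨?_, ?_⟩)
    · rintro ⟨⟨g, hg⟩, h⟩ ⟨⟨g', hg'⟩, h'⟩ hh
      simp only [Subtype.mk.injEq] at hh ⊢
      exact hh
    · rintro ⟨⟨x, hx⟩, hox⟩
      rw [← orderOf_coe'] at hox
      exact ⟨⟨⟨x, hox⟩, huniq ⟨x, hox⟩ Q hx⟩, rfl⟩
  calc Nat.card {g : G // orderOf g = d}
      = Nat.card ((Q : Sylow p G) × {g : {g : G // orderOf g = d} // f g = Q}) :=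
        (Nat.card_congr (Equiv.sigmaFiberEquiv f)).symm
    _ = ∑ Q : Sylow p G, Nat.card {g : {g : G // orderOf g = d} // f g = Q} := by
        simp [Nat.card_eq_fintype_card, Fintype.card_sigma]
    _ = ∑ Q : Sylow p G, k := by
        refine Finset.sum_congr rfl fun Q _ => ?_
        rw [fib Q, sylow_order_count_eq P Q, hk]
    _ = Fintype.card (Sylow p G) * k := by simp [Finset.sum_const, Finset.card_univ, mul_comm]
    _ = k * (Subgroup.normalizer ((P : Subgroup G) : Set G)).index := by
        erw [← Sylow.card_eq_index_normalizer P, Nat.card_eq_fintype_card, mul_comm]
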